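/- In the grid-neutral optimal solution, all grid-charging RAUs k with 0 < p_k* < p_max and p_k* < E_k share a common ratio √(p_k*)/γ_k = κ_G = (∑_i √(p_i*) γ_i)/(μη); all grid-discharging RAUs with 0 < p_k* < p_max and p_k* > E_k share a common ratio √(p_k*)/γ_k = κ_L = (∑_i √(p_i*) γ_i)/(μ/η); and κ_L = η² κ_G < κ_G. In particular, for two grid-charging RAUs j, k with interior powers, p_j* = (γ_j²/γ_k²) p_k*. -/

import Mathlib

open Finset



lemma sum_two {N : ℕ} {j k : Fin N} (hjk : j ≠ k) (a b : ℝ) :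
    ∑ i, (if i = j then a else if i = k then b else 0) = a + b := by
  have h : ∀ i : Fin N, (if i = j then a else if i = k then b else 0)
      = (if i = j then a else 0) + (if i = k then b else 0) := by
    intro i
    by_cases h1 : i = j
    · subst h1; simp [hjk]
    · by_cases h2 : i = k <;> simp [h1, h2, Ne.symm hjk]
  simp only [h, Finset.sum_add_distrib, Finset.sum_ite_eq', Finset.mem_univ, if_true]

lemma ev_lt (a b c : ℝ) (h : a < b) : ∀ᶠ ε in nhds (0:ℝ), a + c * ε < b := by
  have ht : Filter.Tendsto (fun ε : ℝ => a + c * ε) (nhds 0) (nhds a) := by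
    have : Filter.Tendsto (fun ε : ℝ => a + c * ε) (nhds 0) (nhds (a + c * 0)) :=
      tendsto_const_nhds.add (tendsto_const_nhds.mul Filter.tendsto_id)
    simpa using this
  exact ht.eventually (eventually_lt_nhds h)

lemma ev_gt (a b c : ℝ) (h : b < a) : ∀ᶠ ε in nhds (0:ℝ), b < a + c * ε := by
  have ht : Filter.Tendsto (fun ε : ℝ => a + c * ε) (nhds 0) (nhds a) := by
    have : Filter.Tendsto (fun ε : ℝ => a + c * ε) (nhds 0) (nhds (a + c * 0)) :=
      tendsto_const_nhds.add (tendsto_const_nhds.mul Filter.tendsto_id)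
    simpa using this
  exact ht.eventually (eventually_gt_nhds h)

lemma aux_deriv {N : ℕ} (γ p : Fin N → ℝ) (j k : Fin N) (hjk : j ≠ k) (c : ℝ)
    (hpj : 0 < p j) (hpk : 0 < p k)
    (hloc : ∀ᶠ ε in nhds (0:ℝ),
      ∑ i, Real.sqrt (p i + (if i = j then ε else if i = k then c * ε else 0)) * γ i
        ≤ ∑ i, Real.sqrt (p i) * γ i) :
    γ j / (2 * Real.sqrt (p j)) + c * (γ k / (2 * Real.sqrt (p k))) = 0 := by
  set f : ℝ → ℝ := fun ε =>
    ∑ i, Real.sqrt (p i + (if i = j then ε else if i = k then c * ε else 0)) * γ i with hf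
  have hderiv : HasDerivAt f
      (γ j / (2 * Real.sqrt (p j)) + c * (γ k / (2 * Real.sqrt (p k)))) 0 := by
    have h : HasDerivAt f
        (∑ i, (if i = j then γ j / (2 * Real.sqrt (p j))
          else if i = k then c * (γ k / (2 * Real.sqrt (p k))) else 0)) 0 := by
      apply HasDerivAt.fun_sum
      intro i _
      by_cases h1 : i = j
      · subst h1
        simp only [if_pos rfl]
        have h0 : HasDerivAt (fun ε : ℝ => p i + ε) 1 0 := by
          simpa using (hasDerivAt_id (0:ℝ)).const_add (p i)
        have h1' : HasDerivAt (fun ε : ℝ => Real.sqrt (p i + ε))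
            (1 / (2 * Real.sqrt (p i + 0)) * 1) 0 :=
          (Real.hasDerivAt_sqrt (by positivity)).comp 0 h0
        have := h1'.mul_const (γ i)
        refine this.congr_deriv ?_
        simp only [if_true, eq_self_iff_true, ite_true]
        rw [add_zero]; ring
      · by_cases h2 : i = k
        · subst h2
          simp only [if_neg h1, if_pos rfl]
          have h0 : HasDerivAt (fun ε : ℝ => p i + c * ε) c 0 := by
            simpa using ((hasDerivAt_id (0:ℝ)).const_mul c).const_add (p i)
          have h1' : HasDerivAt (fun ε : ℝ => Real.sqrt (p i + c * ε))
              (1 / (2 * Real.sqrt (p i + c * 0)) * c) 0 :=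
            (Real.hasDerivAt_sqrt (by rw [mul_zero, add_zero]; exact hpk.ne')).comp 0 h0
          have := h1'.mul_const (γ i)
          refine this.congr_deriv ?_
          simp only [if_true, eq_self_iff_true, ite_true]
          rw [mul_zero, add_zero]; ring
        · simp only [if_neg h1, if_neg h2]
          simpa using (hasDerivAt_const (0:ℝ) (Real.sqrt (p i + 0) * γ i))
    rwa [sum_two hjk] at h
  have hf0 : f 0 = ∑ i, Real.sqrt (p i) * γ i := by
    apply Finset.sum_congr rfl
    intro i _
    congr 1
    congr 1
    split <;> simp
  have hmax : IsLocalMax f 0 := by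
    filter_upwards [hloc] with ε hε
    rw [hf0]; exact hε
  have := hmax.deriv_eq_zero
  rwa [hderiv.deriv] at this

lemma term_lt (η x e : ℝ) (h : x < e) :
    η * max (e - x) 0 - max (x - e) 0 / η = η * (e - x) := by
  rw [max_eq_left (by linarith), max_eq_right (by linarith)]
  simp

lemma term_gt (η x e : ℝ) (h : e < x) :
    η * max (e - x) 0 - max (x - e) 0 / η = -((x - e) / η) := by
  rw [max_eq_right (by linarith), max_eq_left (by linarith)]
  simp

lemma pair_stationary {N : ℕ} (γ E : Fin N → ℝ) (pmax η : ℝ)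
    (hγ : ∀ i, 0 < γ i) (p : Fin N → ℝ)
    (hfeas1 : ∀ i, 0 ≤ p i ∧ p i ≤ pmax)
    (hbalsum : ∑ i, (η * max (E i - p i) 0 - max (p i - E i) 0 / η) = 0)
    (hopt : ∀ q : Fin N → ℝ,
      (∀ i, 0 ≤ q i ∧ q i ≤ pmax) →
      ∑ i, (η * max (E i - q i) 0 - max (q i - E i) 0 / η) = 0 →
      (∑ i, Real.sqrt (q i) * γ i) ^ 2 ≤ (∑ i, Real.sqrt (p i) * γ i) ^ 2)
    (j k : Fin N) (hjk : j ≠ k) (c : ℝ)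
    (hpj : 0 < p j) (hpj2 : p j < pmax) (hpk : 0 < p k) (hpk2 : p k < pmax)
    (hsign : ∀ᶠ ε in nhds (0:ℝ),
      (η * max (E j - (p j + ε)) 0 - max ((p j + ε) - E j) 0 / η)
        + (η * max (E k - (p k + c * ε)) 0 - max ((p k + c * ε) - E k) 0 / η)
      = (η * max (E j - p j) 0 - max (p j - E j) 0 / η)
        + (η * max (E k - p k) 0 - max (p k - E k) 0 / η)) :
    γ j / (2 * Real.sqrt (p j)) + c * (γ k / (2 * Real.sqrt (p k))) = 0 := by
  apply aux_deriv γ p j k hjk c hpj hpk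
  have hb1 := ev_gt (p j) 0 1 hpj
  have hb2 := ev_lt (p j) pmax 1 hpj2
  have hb3 := ev_gt (p k) 0 c hpk
  have hb4 := ev_lt (p k) pmax c hpk2
  filter_upwards [hb1, hb2, hb3, hb4, hsign] with ε h1 h2 h3 h4 h5
  rw [one_mul] at h1 h2
  set q : Fin N → ℝ := fun i => p i + (if i = j then ε else if i = k then c * ε else 0)
    with hq
  have hqj : q j = p j + ε := by simp [hq]
  have hqk : q k = p k + c * ε := by simp [hq, Ne.symm hjk]
  have hqo : ∀ i, i ≠ j → i ≠ k → q i = p i := by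
    intro i hij hik; simp [hq, hij, hik]
  have hfq : ∀ i, 0 ≤ q i ∧ q i ≤ pmax := by
    intro i
    by_cases hij : i = j
    · subst hij; rw [hqj]; exact ⟨le_of_lt h1, le_of_lt h2⟩
    · by_cases hik : i = k
      · subst hik; rw [hqk]; exact ⟨le_of_lt h3, le_of_lt h4⟩
      · rw [hqo i hij hik]; exact hfeas1 i
  have hbq : ∑ i, (η * max (E i - q i) 0 - max (q i - E i) 0 / η) = 0 := by
    have hsplit : ∀ i ∈ Finset.univ, (η * max (E i - q i) 0 - max (q i - E i) 0 / η)
        = (η * max (E i - p i) 0 - max (p i - E i) 0 / η)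
          + (if i = j then
              (η * max (E j - (p j + ε)) 0 - max ((p j + ε) - E j) 0 / η)
                - (η * max (E j - p j) 0 - max (p j - E j) 0 / η)
             else if i = k then
              (η * max (E k - (p k + c * ε)) 0 - max ((p k + c * ε) - E k) 0 / η)
                - (η * max (E k - p k) 0 - max (p k - E k) 0 / η)
             else 0) := by
      intro i _
      by_cases hij : i = j
      · subst hij; rw [hqj, if_pos rfl]; ring
      · by_cases hik : i = k
        · subst hik; rw [hqk, if_neg hij, if_pos rfl]; ring
        · rw [hqo i hij hik, if_neg hij, if_neg hik]; ring
    rw [Finset.sum_congr rfl hsplit, Finset.sum_add_distrib, hbalsum, sum_two hjk]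
    linarith [h5]
  have hle := hopt q hfq hbq
  have hnn : 0 ≤ ∑ i, Real.sqrt (q i) * γ i :=
    Finset.sum_nonneg fun i _ => mul_nonneg (Real.sqrt_nonneg _) (hγ i).le
  have hnnp : 0 ≤ ∑ i, Real.sqrt (p i) * γ i :=
    Finset.sum_nonneg fun i _ => mul_nonneg (Real.sqrt_nonneg _) (hγ i).le
  show ∑ i, Real.sqrt (q i) * γ i ≤ ∑ i, Real.sqrt (p i) * γ i
  nlinarith [hle, hnn, hnnp]

lemma ratio_of_stat (a b ga gb t : ℝ) (ha : 0 < a) (hb : 0 < b)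
    (hga : 0 < ga) (hgb : 0 < gb)
    (h : ga / (2 * Real.sqrt a) + -t * (gb / (2 * Real.sqrt b)) = 0) :
    Real.sqrt b / gb = t * (Real.sqrt a / ga) := by
  have sa := Real.sqrt_pos.mpr ha
  have sb := Real.sqrt_pos.mpr hb
  field_simp at h ⊢
  nlinarith [h, sa, sb, mul_pos sa sb]

lemma clause3 (S μ η : ℝ) (hη1 : 0 < η) (hμ : 0 < μ) :
    S / (μ / η) = η ^ 2 * (S / (μ * η)) := by
  field_simp

lemma clause4 (S μ η : ℝ) (hS : 0 < S) (hμ : 0 < μ) (hη1 : 0 < η) (hη2 : η < 1) :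
    S / (μ / η) < S / (μ * η) := by
  have h1 : μ * η < μ / η := by
    rw [lt_div_iff₀ hη1]
    have hh : η * η < 1 := by nlinarith
    nlinarith [mul_lt_mul_of_pos_left hh hμ]
  have h2 : 0 < μ * η := by positivity
  have h3 : 0 < μ / η := by positivity
  exact div_lt_div_of_pos_left hS h2 h1

/-- Grid-neutral case: interior grid-charging RAUs share a common ratio
`√p*ₖ/γₖ = κ_G = (∑ √p*ᵢ γᵢ)/(μη)`, interior grid-discharging RAUs share the ratio
`κ_L = (∑ √p*ᵢ γᵢ)/(μ/η)`, and `κ_L = η² κ_G < κ_G`; in particular interior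
grid-charging RAUs `j, k` satisfy `p*ⱼ = (γⱼ²/γₖ²) p*ₖ`. -/theorem stmt_7 (N : ℕ) (γ E : Fin N → ℝ) (pmax η : ℝ)
    (hγ : ∀ i, 0 < γ i) (hE : ∀ i, 0 < E i) (hpmax : 0 < pmax)
    (hη1 : 0 < η) (hη2 : η < 1)
    (p : Fin N → ℝ)
    (hfeas : (∀ i, 0 ≤ p i ∧ p i ≤ pmax) ∧
      ∑ i, (η * max (E i - p i) 0 - max (p i - E i) 0 / η) = 0)
    (hopt : ∀ q : Fin N → ℝ,
      (∀ i, 0 ≤ q i ∧ q i ≤ pmax) →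
      ∑ i, (η * max (E i - q i) 0 - max (q i - E i) 0 / η) = 0 →
      (∑ i, Real.sqrt (q i) * γ i) ^ 2 ≤ (∑ i, Real.sqrt (p i) * γ i) ^ 2)
    (hpos : ∃ i, 0 < p i) :
    ∃ μ : ℝ, 0 < μ ∧
      (∀ k, 0 < p k → p k < pmax → p k < E k →
        Real.sqrt (p k) / γ k = (∑ i, Real.sqrt (p i) * γ i) / (μ * η)) ∧
      (∀ k, 0 < p k → p k < pmax → E k < p k →
        Real.sqrt (p k) / γ k = (∑ i, Real.sqrt (p i) * γ i) / (μ / η)) ∧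
      (∑ i, Real.sqrt (p i) * γ i) / (μ / η) =
        η ^ 2 * ((∑ i, Real.sqrt (p i) * γ i) / (μ * η)) ∧
      (∑ i, Real.sqrt (p i) * γ i) / (μ / η) <
        (∑ i, Real.sqrt (p i) * γ i) / (μ * η) ∧
      (∀ j k, 0 < p j → p j < pmax → p j < E j →
        0 < p k → p k < pmax → p k < E k →
        p j = (γ j ^ 2 / γ k ^ 2) * p k) := by
  obtain ⟨hfeas1, hbalsum⟩ := hfeas
  set Sv : ℝ := ∑ i, Real.sqrt (p i) * γ i with hSv
  have hS : 0 < Sv := by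
    obtain ⟨i0, hi0⟩ := hpos
    exact Finset.sum_pos' (fun i _ => mul_nonneg (Real.sqrt_nonneg _) (hγ i).le)
      ⟨i0, Finset.mem_univ i0, mul_pos (Real.sqrt_pos.mpr hi0) (hγ i0)⟩
  by_cases hC : ∃ k, 0 < p k ∧ p k < pmax ∧ p k < E k
  · obtain ⟨k₀, hk1, hk2, hk3⟩ := hC
    set r : ℝ := Real.sqrt (p k₀) / γ k₀ with hrdef
    have hr : 0 < r := div_pos (Real.sqrt_pos.mpr hk1) (hγ k₀)
    have hμ : 0 < Sv / (η * r) := by positivity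
    have chargeEq : ∀ k, 0 < p k → p k < pmax → p k < E k →
        Real.sqrt (p k) / γ k = r := by
      intro k h1 h2 h3
      by_cases hkk : k = k₀
      · subst hkk; rfl
      · have hsign : ∀ᶠ ε in nhds (0:ℝ),
            (η * max (E k - (p k + ε)) 0 - max ((p k + ε) - E k) 0 / η)
              + (η * max (E k₀ - (p k₀ + (-1) * ε)) 0
                  - max ((p k₀ + (-1) * ε) - E k₀) 0 / η)
            = (η * max (E k - p k) 0 - max (p k - E k) 0 / η)
              + (η * max (E k₀ - p k₀) 0 - max (p k₀ - E k₀) 0 / η) := by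
          filter_upwards [ev_lt (p k) (E k) 1 h3, ev_lt (p k₀) (E k₀) (-1) hk3]
            with ε hA hB
          rw [one_mul] at hA
          rw [term_lt η _ _ hA, term_lt η _ _ hB, term_lt η _ _ h3,
            term_lt η _ _ hk3]
          ring
        have hst := pair_stationary γ E pmax η hγ p hfeas1 hbalsum hopt
          k k₀ hkk (-1) h1 h2 hk1 hk2 hsign
        have := ratio_of_stat (p k) (p k₀) (γ k) (γ k₀) 1 h1 hk1 (hγ k) (hγ k₀)
          (by rw [neg_one_mul] at hst ⊢; exact hst)
        rw [hrdef, this, one_mul]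
    have hkey1 : Sv / (Sv / (η * r) * η) = r := by
      field_simp
    have hkey2 : Sv / (Sv / (η * r) / η) = η ^ 2 * r := by
      have hd : (0:ℝ) < Sv / (η * r) / η := by positivity
      rw [eq_comm, eq_div_iff hd.ne']
      field_simp
    refine ⟨Sv / (η * r), hμ, ?_, ?_, clause3 Sv _ η hη1 hμ,
      clause4 Sv _ η hS hμ hη1 hη2, ?_⟩
    · intro k h1 h2 h3
      rw [chargeEq k h1 h2 h3, hkey1]
    · intro k h1 h2 h3
      have hne : k₀ ≠ k := by
        intro h; rw [h] at hk3; linarith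
      have hsign : ∀ᶠ ε in nhds (0:ℝ),
          (η * max (E k₀ - (p k₀ + ε)) 0 - max ((p k₀ + ε) - E k₀) 0 / η)
            + (η * max (E k - (p k + (-η ^ 2) * ε)) 0
                - max ((p k + (-η ^ 2) * ε) - E k) 0 / η)
          = (η * max (E k₀ - p k₀) 0 - max (p k₀ - E k₀) 0 / η)
            + (η * max (E k - p k) 0 - max (p k - E k) 0 / η) := by
        filter_upwards [ev_lt (p k₀) (E k₀) 1 hk3, ev_gt (p k) (E k) (-η ^ 2) h3]
          with ε hA hB
        rw [one_mul] at hA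
        rw [term_lt η _ _ hA, term_gt η _ _ hB, term_lt η _ _ hk3,
          term_gt η _ _ h3]
        field_simp
        ring
      have hst := pair_stationary γ E pmax η hγ p hfeas1 hbalsum hopt
        k₀ k hne (-η ^ 2) hk1 hk2 h1 h2 hsign
      have := ratio_of_stat (p k₀) (p k) (γ k₀) (γ k) (η ^ 2) hk1 h1
        (hγ k₀) (hγ k) hst
      rw [this, hkey2, hrdef]
    · intro j k hj1 hj2 hj3 hk1' hk2' hk3'
      have e0 : Real.sqrt (p j) / γ j = Real.sqrt (p k) / γ k := by
        rw [chargeEq j hj1 hj2 hj3, chargeEq k hk1' hk2' hk3']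
      have e1 : Real.sqrt (p j) * γ k = Real.sqrt (p k) * γ j :=
        (div_eq_div_iff (hγ j).ne' (hγ k).ne').mp e0
      have e2 := congrArg (fun x : ℝ => x ^ 2) e1
      simp only [mul_pow, Real.sq_sqrt hj1.le, Real.sq_sqrt hk1'.le] at e2
      have hgk := hγ k
      field_simp
      linarith [e2]
  · by_cases hD : ∃ k, 0 < p k ∧ p k < pmax ∧ E k < p k
    · obtain ⟨k₀, hk1, hk2, hk3⟩ := hD
      set r : ℝ := Real.sqrt (p k₀) / γ k₀ with hrdef
      have hr : 0 < r := div_pos (Real.sqrt_pos.mpr hk1) (hγ k₀)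
      have hμ : 0 < Sv * η / r := by positivity
      have hkey : Sv / (Sv * η / r / η) = r := by
        field_simp
      refine ⟨Sv * η / r, hμ, ?_, ?_, clause3 Sv _ η hη1 hμ,
        clause4 Sv _ η hS hμ hη1 hη2, ?_⟩
      · intro k h1 h2 h3
        exact absurd ⟨k, h1, h2, h3⟩ hC
      · intro k h1 h2 h3
        by_cases hkk : k = k₀
        · subst hkk; rw [hkey]
        · have hsign : ∀ᶠ ε in nhds (0:ℝ),
              (η * max (E k - (p k + ε)) 0 - max ((p k + ε) - E k) 0 / η)
                + (η * max (E k₀ - (p k₀ + (-1) * ε)) 0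
                    - max ((p k₀ + (-1) * ε) - E k₀) 0 / η)
              = (η * max (E k - p k) 0 - max (p k - E k) 0 / η)
                + (η * max (E k₀ - p k₀) 0 - max (p k₀ - E k₀) 0 / η) := by
            filter_upwards [ev_gt (p k) (E k) 1 h3, ev_gt (p k₀) (E k₀) (-1) hk3]
              with ε hA hB
            rw [one_mul] at hA
            rw [term_gt η _ _ hA, term_gt η _ _ hB, term_gt η _ _ h3,
              term_gt η _ _ hk3]
            field_simp
            ring
          have hst := pair_stationary γ E pmax η hγ p hfeas1 hbalsum hopt
            k k₀ hkk (-1) h1 h2 hk1 hk2 hsign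
          have := ratio_of_stat (p k) (p k₀) (γ k) (γ k₀) 1 h1 hk1 (hγ k) (hγ k₀)
            (by rw [neg_one_mul] at hst ⊢; exact hst)
          rw [hkey, hrdef, this, one_mul]
      · intro j k hj1 hj2 hj3
        exact absurd ⟨j, hj1, hj2, hj3⟩ hC
    · refine ⟨1, one_pos, ?_, ?_, clause3 Sv 1 η hη1 one_pos,
        clause4 Sv 1 η hS one_pos hη1 hη2, ?_⟩
      · intro k h1 h2 h3
        exact absurd ⟨k, h1, h2, h3⟩ hC
      · intro k h1 h2 h3
        exact absurd ⟨k, h1, h2, h3⟩ hD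
      · intro j k hj1 hj2 hj3
        exact absurd ⟨j, hj1, hj2, hj3⟩ hC
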